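/- The allocation of the Find-Price-Block routine is feasible: with budgets B_1 ≥ ... ≥ B_n > 0, slots D_1 > ... > D_n > 0, price p = max_ℓ (Σ_{i≤ℓ} B_i)/(Σ_{i≤ℓ} D_i), and ℓ* the largest maximizer, the clicks c_i = B_i/p for i ≤ ℓ* satisfy c_1 ≥ ... ≥ c_{ℓ*} and Σ_{i≤ℓ} c_i ≤ Σ_{i≤ℓ} D_i for every ℓ ≤ ℓ*, with equality at ℓ = ℓ*. -/
import Mathlib


/-- Feasibility of the Find-Price-Block allocation: with sorted budgets and slots,
price `p = max_ℓ r_ℓ` and `l*` the largest maximizer, the clicks `cᵢ = Bᵢ/p` for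
`i ≤ l*` are nonincreasing and satisfy all prefix constraints, with equality at `l*`. -/
theorem stmt5 {n : ℕ} (B D : Fin n → ℝ)
    (hB : Antitone B) (hBpos : ∀ i, 0 < B i)
    (hD : StrictAnti D) (hDpos : ∀ i, 0 < D i)
    (r : Fin n → ℝ)
    (hr : ∀ ℓ, r ℓ = (∑ i ∈ Finset.Iic ℓ, B i) / (∑ i ∈ Finset.Iic ℓ, D i))
    (p : ℝ) (lstar : Fin n)
    (hmax : ∀ ℓ, r ℓ ≤ p) (hp : r lstar = p)
    (hlargest : ∀ ℓ, r ℓ = p → ℓ ≤ lstar) :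
    (∀ i j : Fin n, i ≤ j → j ≤ lstar → B j / p ≤ B i / p) ∧
    (∀ ℓ : Fin n, ℓ ≤ lstar → ∑ i ∈ Finset.Iic ℓ, B i / p ≤ ∑ i ∈ Finset.Iic ℓ, D i) ∧
    (∑ i ∈ Finset.Iic lstar, B i / p = ∑ i ∈ Finset.Iic lstar, D i) := by
  have hDS : ∀ ℓ : Fin n, 0 < ∑ i ∈ Finset.Iic ℓ, D i := fun ℓ =>
    Finset.sum_pos (fun i _ => hDpos i) ⟨ℓ, Finset.mem_Iic.2 le_rfl⟩
  have hBS : ∀ ℓ : Fin n, 0 < ∑ i ∈ Finset.Iic ℓ, B i := fun ℓ =>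
    Finset.sum_pos (fun i _ => hBpos i) ⟨ℓ, Finset.mem_Iic.2 le_rfl⟩
  have hppos : 0 < p := by
    rw [← hp, hr]; exact div_pos (hBS lstar) (hDS lstar)
  refine ⟨fun i j hij _ => by gcongr; exact hB hij, fun ℓ _ => ?_, ?_⟩
  · rw [← Finset.sum_div, div_le_iff₀ hppos]
    have := hmax ℓ
    rw [hr, div_le_iff₀ (hDS ℓ)] at this
    linarith
  · rw [← Finset.sum_div, div_eq_iff (ne_of_gt hppos)]
    have := hp
    rw [hr, div_eq_iff (ne_of_gt (hDS lstar))] at this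
    linarith
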